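/- Let q be a complex number with 0<|q|<1, let p≥1, let c_1,...,c_p be nonzero complex numbers, and let y_1,...,y_p be nonnegative integers with |y| = y_1+...+y_p. Then ∏_{k,l=1}^p (q c_k/c_l)_{y_k} / (q^{-y_l} c_k/c_l)_{y_k} = (-1)^{|y|} q^{|y| + binom(|y|,2)} ∏_{1≤k<l≤p} (c_k q^{y_k} - c_l q^{y_l})/(c_k - c_l), provided no denominator vanishes. -/

import Mathlib

open Finset

/-- q-shifted factorial `(a;q)_k` for natural `k`. -/
noncomputable def qPoch (q a : ℂ) (k : ℕ) : ℂ := ∏ j ∈ Finset.range k, (1 - a * q ^ j)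

lemma sum_aux (n : ℕ) : ∑ j ∈ Finset.range n, (n - j) = n + n.choose 2 := by
  have h1 : ∑ j ∈ Finset.range n, (n - j) = ∑ j ∈ Finset.range n, (j + 1) := by
    rw [← Finset.sum_range_reflect (fun j => j + 1) n]
    refine Finset.sum_congr rfl fun j hj => ?_
    simp only [Finset.mem_range] at hj; omega
  rw [h1, Finset.sum_add_distrib, Finset.sum_const, Finset.sum_range_id,
    smul_eq_mul, mul_one, Nat.choose_two_right, Finset.card_range]
  ring

lemma diag_mul (q : ℂ) (hq : q ≠ 0) (n : ℕ) :
    qPoch q (q ^ (-(n:ℤ))) n * ((-1)^n * q ^ (n + n.choose 2)) = qPoch q q n := by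
  rw [← sum_aux n, ← Finset.prod_pow_eq_pow_sum,
    show ((-1 : ℂ))^n = ∏ _j ∈ Finset.range n, (-1 : ℂ) by simp,
    ← Finset.prod_mul_distrib]
  unfold qPoch
  rw [← Finset.prod_mul_distrib, ← Finset.prod_range_reflect (fun j => 1 - q * q ^ j) n]
  refine Finset.prod_congr rfl fun j hj => ?_
  simp only [Finset.mem_range] at hj
  have h1 : q ^ (-(n:ℤ)) * q ^ (j:ℕ) = q ^ ((j:ℤ) - n) := by
    rw [← zpow_natCast q j, ← zpow_add₀ hq]; ring_nf
  have h2 : (q:ℂ) ^ ((n:ℤ) - j) = q ^ ((n - j : ℕ) : ℤ) := by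
    congr 1; omega
  have h3 : q ^ ((j:ℤ) - n) * q ^ ((n:ℤ) - j) = 1 := by
    rw [← zpow_add₀ hq]; norm_num
  have h4 : 1 - q * q ^ (n - 1 - j) = 1 - q ^ ((n:ℤ) - j) := by
    rw [h2, zpow_natCast, ← pow_succ']
    congr 2; omega
  rw [h1, h4, ← zpow_natCast q (n - j), ← h2]
  linear_combination h3

lemma Ioc_succ_int (b : ℤ) : Finset.Ioc b (b+1) = {b+1} := by
  ext x; simp only [Finset.mem_Ioc, Finset.mem_singleton]; omega

lemma prod_Ioc_glue (F : ℤ → ℂ) {a b c : ℤ} (h1 : a ≤ b) (h2 : b ≤ c) :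
    (∏ i ∈ Finset.Ioc a b, F i) * ∏ i ∈ Finset.Ioc b c, F i = ∏ i ∈ Finset.Ioc a c, F i := by
  rw [← Finset.prod_union, Finset.Ioc_union_Ioc_eq_Ioc h1 h2]
  rw [Finset.disjoint_left]
  intro x hx hx'
  simp only [Finset.mem_Ioc] at hx hx'
  omega

lemma shift_prod (F : ℤ → ℂ) (c : ℤ) (m : ℕ) :
    ∏ j ∈ Finset.range m, F (c + j + 1) = ∏ i ∈ Finset.Ioc c (c + m), F i := by
  induction m with
  | zero => simp
  | succ m ih =>
      rw [Finset.prod_range_succ, ih]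
      have h : (c : ℤ) + (m+1 : ℕ) = (c + m) + 1 := by push_cast; ring
      rw [h, ← prod_Ioc_glue F (by omega : c ≤ c + m) (by omega : (c:ℤ) + m ≤ c + m + 1),
        Ioc_succ_int, Finset.prod_singleton]

lemma key (q a : ℂ) (hq : q ≠ 0) (ha : a ≠ 0) (m n : ℕ) :
    qPoch q (q*a) m * qPoch q (q*a⁻¹) n * (1 - a) =
    q^(m*n+n) * (qPoch q (q^(-(n:ℤ))*a) m * qPoch q (q^(-(m:ℤ))*a⁻¹) n
      * (1 - a * q^((m:ℤ)-n))) := by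
  set F : ℤ → ℂ := fun j => 1 - a * q ^ j with hF
  have hN : qPoch q (q*a) m = ∏ i ∈ Finset.Ioc (0:ℤ) m, F i := by
    have hsh := shift_prod F 0 m
    rw [zero_add] at hsh
    rw [qPoch, ← hsh]
    refine Finset.prod_congr rfl fun j _ => ?_
    simp only [hF]
    rw [show (0:ℤ) + j + 1 = (j:ℤ) + 1 by ring, zpow_add₀ hq, zpow_one, zpow_natCast]
    ring
  have hD : qPoch q (q^(-(n:ℤ))*a) m
      = ∏ i ∈ Finset.Ioc (-(n:ℤ)-1) ((-(n:ℤ)-1) + m), F i := by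
    rw [← shift_prod F (-(n:ℤ)-1) m, qPoch]
    refine Finset.prod_congr rfl fun j _ => ?_
    simp only [hF]
    rw [show (-(n:ℤ)-1) + j + 1 = (j:ℤ) + (-(n:ℤ)) by ring, zpow_add₀ hq, zpow_natCast]
    ring
  have hN' : qPoch q (q*a⁻¹) n
      = (∏ j ∈ Finset.range n, (-(a⁻¹) * q^((j:ℤ)+1)))
        * ∏ i ∈ Finset.Ioc (-(n:ℤ)-1) (-1:ℤ), F i := by
    have step1 : qPoch q (q*a⁻¹) n
        = ∏ j ∈ Finset.range n, ((-(a⁻¹) * q^((j:ℤ)+1)) * F (-1 - (j:ℤ))) := by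
      rw [qPoch]
      refine Finset.prod_congr rfl fun j _ => ?_
      simp only [hF]
      have h1 : q ^ ((j:ℤ)+1) * q ^ (-1 - (j:ℤ)) = 1 := by
        rw [← zpow_add₀ hq, show (j:ℤ)+1+(-1-(j:ℤ)) = 0 by ring, zpow_zero]
      have h2 : q * a⁻¹ * q ^ (j:ℕ) = a⁻¹ * q ^ ((j:ℤ)+1) := by
        rw [zpow_add₀ hq, zpow_one, zpow_natCast]; ring
      rw [h2]
      field_simp
      linear_combination (-a) * h1
    rw [step1, Finset.prod_mul_distrib]
    congr 1
    have step2 : ∏ j ∈ Finset.range n, F (-1 - (j:ℤ))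
        = ∏ j ∈ Finset.range n, F ((-(n:ℤ)-1) + j + 1) := by
      rw [← Finset.prod_range_reflect (fun j => F (-1 - (j:ℤ))) n]
      refine Finset.prod_congr rfl fun j hj => ?_
      simp only [Finset.mem_range] at hj
      congr 1
      omega
    rw [step2, shift_prod, show (-(n:ℤ)-1) + n = -1 by ring]
  have hD' : qPoch q (q^(-(m:ℤ))*a⁻¹) n
      = (∏ j ∈ Finset.range n, (-(a⁻¹) * q^((j:ℤ)-m)))
        * ∏ i ∈ Finset.Ioc ((m:ℤ)-n) (m:ℤ), F i := by
    have step1 : qPoch q (q^(-(m:ℤ))*a⁻¹) n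
        = ∏ j ∈ Finset.range n, ((-(a⁻¹) * q^((j:ℤ)-m)) * F ((m:ℤ) - j)) := by
      rw [qPoch]
      refine Finset.prod_congr rfl fun j _ => ?_
      simp only [hF]
      have h1 : q ^ ((j:ℤ)-m) * q ^ ((m:ℤ) - j) = 1 := by
        rw [← zpow_add₀ hq, show (j:ℤ)-m+((m:ℤ)-j) = 0 by ring, zpow_zero]
      have h2 : q^(-(m:ℤ)) * a⁻¹ * q ^ (j:ℕ) = a⁻¹ * q ^ ((j:ℤ)-m) := by
        rw [show (j:ℤ)-m = (-(m:ℤ)) + j by ring, zpow_add₀ hq, zpow_natCast]; ring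
      rw [h2]
      field_simp
      linear_combination (-a) * h1
    rw [step1, Finset.prod_mul_distrib]
    congr 1
    have step2 : ∏ j ∈ Finset.range n, F ((m:ℤ) - (j:ℤ))
        = ∏ j ∈ Finset.range n, F (((m:ℤ)-n) + j + 1) := by
      rw [← Finset.prod_range_reflect (fun j => F ((m:ℤ) - (j:ℤ))) n]
      refine Finset.prod_congr rfl fun j hj => ?_
      simp only [Finset.mem_range] at hj
      congr 1
      omega
    rw [step2, shift_prod, show ((m:ℤ)-n) + n = (m:ℤ) by ring]
  have hS : ∏ j ∈ Finset.range n, (-(a⁻¹) * q^((j:ℤ)+1))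
      = q^(m*n+n) * ∏ j ∈ Finset.range n, (-(a⁻¹) * q^((j:ℤ)-m)) := by
    have : (q:ℂ)^(m*n+n) = ∏ _j ∈ Finset.range n, q^(m+1) := by
      rw [Finset.prod_const, Finset.card_range, ← pow_mul]
      congr 1; ring
    rw [this, ← Finset.prod_mul_distrib]
    refine Finset.prod_congr rfl fun j _ => ?_
    rw [show ((j:ℤ)+1) = ((m:ℤ)+1) + ((j:ℤ)-m) by ring, zpow_add₀ hq,
      show ((m:ℤ)+1) = ((m+1:ℕ):ℤ) by push_cast; ring, zpow_natCast]
    ring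
  have hF0 : (1:ℂ) - a = F 0 := by simp [hF]
  have hFmn : (1:ℂ) - a * q^((m:ℤ)-n) = F ((m:ℤ)-n) := by simp [hF]
  have hglue1 : (∏ i ∈ Finset.Ioc (-(n:ℤ)-1) (-1:ℤ), F i) * F 0
      * (∏ i ∈ Finset.Ioc (0:ℤ) (m:ℤ), F i) = ∏ i ∈ Finset.Ioc (-(n:ℤ)-1) (m:ℤ), F i := by
    have e0 := Ioc_succ_int (-1:ℤ)
    rw [show (-1:ℤ)+1 = 0 by ring] at e0
    have e1 : F 0 = ∏ i ∈ Finset.Ioc (-1:ℤ) 0, F i := by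
      rw [e0, Finset.prod_singleton]
    rw [e1, prod_Ioc_glue F (by omega) (by omega), prod_Ioc_glue F (by omega) (by omega)]
  have hglue2 : (∏ i ∈ Finset.Ioc (-(n:ℤ)-1) ((-(n:ℤ)-1) + m), F i) * F ((m:ℤ)-n)
      * (∏ i ∈ Finset.Ioc ((m:ℤ)-n) (m:ℤ), F i) = ∏ i ∈ Finset.Ioc (-(n:ℤ)-1) (m:ℤ), F i := by
    have e0 := Ioc_succ_int ((m:ℤ)-n-1)
    rw [show ((m:ℤ)-n-1)+1 = (m:ℤ)-n by ring] at e0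
    have e1 : F ((m:ℤ)-n) = ∏ i ∈ Finset.Ioc ((m:ℤ)-n-1) ((m:ℤ)-n), F i := by
      rw [e0, Finset.prod_singleton]
    rw [show ((-(n:ℤ)-1) + m) = (m:ℤ)-n-1 by ring, e1,
      prod_Ioc_glue F (by omega) (by omega), prod_Ioc_glue F (by omega) (by omega)]
  rw [hN, hD, hN', hD', hF0, hFmn]
  linear_combination ((∏ i ∈ Finset.Ioc (-(n:ℤ)-1) (-1:ℤ), F i) * F 0
      * (∏ i ∈ Finset.Ioc (0:ℤ) (m:ℤ), F i)) * hS
    + ((q:ℂ)^(m*n+n) * ∏ j ∈ Finset.range n, (-(a⁻¹) * q^((j:ℤ)-m))) * hglue1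
    - ((q:ℂ)^(m*n+n) * ∏ j ∈ Finset.range n, (-(a⁻¹) * q^((j:ℤ)-m))) * hglue2

@[to_additive]
lemma prod_split {M : Type*} [CommMonoid M] {p : ℕ} (F : Fin p → Fin p → M) :
    ∏ k, ∏ l, F k l
      = (∏ k, F k k) * ∏ k, ∏ l ∈ Finset.univ.filter (fun l => k < l), (F k l * F l k) := by
  have stepA : ∀ k : Fin p, ∏ l, F k l
      = F k k * (∏ l ∈ Finset.univ.filter (fun l => l < k), F k l)
        * ∏ l ∈ Finset.univ.filter (fun l => k < l), F k l := by
    intro k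
    rw [← Finset.prod_filter_mul_prod_filter_not Finset.univ (fun l => k < l) (fun l => F k l)]
    have hset : Finset.univ.filter (fun l => ¬ k < l)
        = insert k (Finset.univ.filter (fun l => l < k)) := by
      ext x
      simp only [Finset.mem_filter, Finset.mem_univ, true_and, Finset.mem_insert, not_lt,
        le_iff_lt_or_eq]
      tauto
    rw [hset, Finset.prod_insert (by simp)]
    rw [mul_comm]
  have stepB : ∏ k : Fin p, ∏ l ∈ Finset.univ.filter (fun l => l < k), F k l
      = ∏ k : Fin p, ∏ l ∈ Finset.univ.filter (fun l => k < l), F l k := by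
    refine Finset.prod_comm' fun x y => ?_
    simp
  calc ∏ k, ∏ l, F k l
      = ∏ k, (F k k * (∏ l ∈ Finset.univ.filter (fun l => l < k), F k l)
          * ∏ l ∈ Finset.univ.filter (fun l => k < l), F k l) :=
        Finset.prod_congr rfl fun k _ => stepA k
    _ = (∏ k, F k k) * (∏ k, ∏ l ∈ Finset.univ.filter (fun l => l < k), F k l)
          * ∏ k, ∏ l ∈ Finset.univ.filter (fun l => k < l), F k l := by
        rw [Finset.prod_mul_distrib, Finset.prod_mul_distrib]
    _ = (∏ k, F k k) * (∏ k, ∏ l ∈ Finset.univ.filter (fun l => k < l), F l k)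
          * ∏ k, ∏ l ∈ Finset.univ.filter (fun l => k < l), F k l := by rw [stepB]
    _ = (∏ k, F k k) * ∏ k, ∏ l ∈ Finset.univ.filter (fun l => k < l), (F k l * F l k) := by
        rw [mul_assoc]
        congr 1
        rw [← Finset.prod_mul_distrib]
        refine Finset.prod_congr rfl fun k _ => ?_
        rw [← Finset.prod_mul_distrib]
        exact Finset.prod_congr rfl fun l _ => mul_comm _ _


lemma choose2_cast (n : ℕ) : ((n.choose 2 : ℕ) : ℤ) * 2 = (n:ℤ) * ((n:ℤ) - 1) := by
  induction n with
  | zero => simp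
  | succ k ih =>
      rw [show k + 1 = k.succ from rfl, Nat.choose_succ_succ, Nat.choose_one_right]
      push_cast at *
      linarith

lemma expid {p : ℕ} (y : Fin p → ℕ) :
    (∑ k, (y k + (y k).choose 2))
      + (∑ k : Fin p, ∑ l ∈ Finset.univ.filter (fun l => k < l), y k * y l)
    = (∑ i, y i) + (∑ i, y i).choose 2 := by
  have hsq : (∑ i, (y i:ℤ)) * (∑ i, (y i:ℤ)) = ∑ k, ∑ l, (y k:ℤ)*(y l:ℤ) :=
    Finset.sum_mul_sum _ _ _ _
  have hsplit := sum_split (fun k l : Fin p => (y k:ℤ)*(y l:ℤ))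
  have hdbl : ∑ k : Fin p, ∑ l ∈ Finset.univ.filter (fun l => k < l),
        ((y k:ℤ)*(y l:ℤ) + (y l:ℤ)*(y k:ℤ))
      = 2 * ∑ k : Fin p, ∑ l ∈ Finset.univ.filter (fun l => k < l), (y k:ℤ)*(y l:ℤ) := by
    rw [Finset.mul_sum]
    refine Finset.sum_congr rfl fun k _ => ?_
    rw [Finset.mul_sum]
    exact Finset.sum_congr rfl fun l _ => by ring
  have hA : (∑ k : Fin p, ((y k:ℤ) + ((y k).choose 2 : ℕ))) * 2
      = (∑ k : Fin p, (y k:ℤ)*(y k:ℤ)) + ∑ k : Fin p, (y k:ℤ) := by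
    rw [Finset.sum_mul, ← Finset.sum_add_distrib]
    refine Finset.sum_congr rfl fun k _ => ?_
    linear_combination choose2_cast (y k)
  have HZ : (((∑ k, (y k + (y k).choose 2))
      + (∑ k : Fin p, ∑ l ∈ Finset.univ.filter (fun l => k < l), y k * y l) : ℕ) : ℤ) * 2
      = (((∑ i, y i) + (∑ i, y i).choose 2 : ℕ) : ℤ) * 2 := by
    push_cast
    have hD := choose2_cast (∑ i, y i)
    push_cast at hD
    linear_combination hA - hD - hsq - hsplit - hdbl
  have := mul_right_cancel₀ (by norm_num : (2:ℤ) ≠ 0) HZ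
  exact_mod_cast this

theorem stmt1 (q : ℂ) (hq0 : 0 < ‖q‖) (hq1 : ‖q‖ < 1)
    (p : ℕ) (hp : 1 ≤ p) (c : Fin p → ℂ) (hc0 : ∀ i, c i ≠ 0)
    (y : Fin p → ℕ)
    (hden : ∀ k l : Fin p, qPoch q (q ^ (-(y l : ℤ)) * c k / c l) (y k) ≠ 0)
    (hcc : ∀ k l : Fin p, k ≠ l → c k ≠ c l) :
    (∏ k : Fin p, ∏ l : Fin p,
        qPoch q (q * c k / c l) (y k) / qPoch q (q ^ (-(y l : ℤ)) * c k / c l) (y k)) =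
    (-1) ^ (∑ i, y i) * q ^ ((∑ i, y i) + Nat.choose (∑ i, y i) 2) *
      ∏ k : Fin p, ∏ l ∈ Finset.univ.filter (fun l => k < l),
        (c k * q ^ y k - c l * q ^ y l) / (c k - c l) := by
  have hq : q ≠ 0 := by
    intro h; rw [h] at hq0; simp at hq0
  rw [prod_split (fun k l => qPoch q (q * c k / c l) (y k)
      / qPoch q (q ^ (-(y l : ℤ)) * c k / c l) (y k))]
  have hdiag : ∏ k : Fin p, (qPoch q (q * c k / c k) (y k)
        / qPoch q (q ^ (-(y k : ℤ)) * c k / c k) (y k))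
      = ∏ k : Fin p, ((-1:ℂ)^(y k) * q ^ (y k + (y k).choose 2)) := by
    refine Finset.prod_congr rfl fun k _ => ?_
    have e1 : q * c k / c k = q := by
      rw [mul_div_assoc, div_self (hc0 k), mul_one]
    have e2 : q ^ (-(y k : ℤ)) * c k / c k = q ^ (-(y k : ℤ)) := by
      rw [mul_div_assoc, div_self (hc0 k), mul_one]
    have hP : qPoch q (q ^ (-(y k : ℤ))) (y k) ≠ 0 := by
      have := hden k k; rwa [e2] at this
    rw [e1, e2, div_eq_iff hP]
    linear_combination - diag_mul q hq (y k)
  have hoff : ∏ k : Fin p, ∏ l ∈ Finset.univ.filter (fun l => k < l),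
        ((qPoch q (q * c k / c l) (y k) / qPoch q (q ^ (-(y l : ℤ)) * c k / c l) (y k))
          * (qPoch q (q * c l / c k) (y l) / qPoch q (q ^ (-(y k : ℤ)) * c l / c k) (y l)))
      = ∏ k : Fin p, ∏ l ∈ Finset.univ.filter (fun l => k < l),
        ((q:ℂ) ^ (y k * y l) * ((c k * q ^ y k - c l * q ^ y l) / (c k - c l))) := by
    refine Finset.prod_congr rfl fun k _ => Finset.prod_congr rfl fun l hl => ?_
    simp only [Finset.mem_filter] at hl
    have hkl : k ≠ l := ne_of_lt hl.2
    set a : ℂ := c k / c l with hadef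
    have ha : a ≠ 0 := div_ne_zero (hc0 k) (hc0 l)
    have hcne : c k ≠ c l := hcc k l hkl
    have hsub : c k - c l ≠ 0 := sub_ne_zero_of_ne hcne
    have ha1 : (1:ℂ) - a ≠ 0 := by
      intro h
      apply hcne
      have h2 : a = 1 := by linear_combination -h
      rw [hadef] at h2
      exact (div_eq_one_iff_eq (hc0 l)).mp h2
    have eN : q * c k / c l = q * a := by rw [hadef, mul_div_assoc]
    have eD : q ^ (-(y l : ℤ)) * c k / c l = q ^ (-(y l : ℤ)) * a := by
      rw [hadef, mul_div_assoc]
    have hai : c l / c k = a⁻¹ := by rw [hadef, inv_div]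
    have eN' : q * c l / c k = q * a⁻¹ := by rw [mul_div_assoc, hai]
    have eD' : q ^ (-(y k : ℤ)) * c l / c k = q ^ (-(y k : ℤ)) * a⁻¹ := by
      rw [mul_div_assoc, hai]
    have hD1 : qPoch q (q ^ (-(y l : ℤ)) * a) (y k) ≠ 0 := by
      have := hden k l; rwa [eD] at this
    have hD2 : qPoch q (q ^ (-(y k : ℤ)) * a⁻¹) (y l) ≠ 0 := by
      have := hden l k; rwa [eD'] at this
    rw [eN, eD, eN', eD', div_mul_div_comm]
    have hkey := key q a hq ha (y k) (y l)
    have h3 : qPoch q (q*a) (y k) * qPoch q (q*a⁻¹) (y l)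
        / (qPoch q (q ^ (-(y l : ℤ)) * a) (y k) * qPoch q (q ^ (-(y k : ℤ)) * a⁻¹) (y l))
        = q ^ (y k * y l + y l) * (1 - a * q ^ ((y k : ℤ) - y l)) / (1 - a) := by
      rw [div_eq_div_iff (mul_ne_zero hD1 hD2) ha1]
      linear_combination hkey
    rw [h3]
    have hzp2 : (q:ℂ) ^ ((y k : ℤ) - y l) * q ^ (y l) = q ^ (y k) := by
      rw [← zpow_natCast q (y l), ← zpow_add₀ hq, ← zpow_natCast q (y k)]
      congr 1; ring
    have hca : a * c l = c k := by
      rw [hadef]; exact div_mul_cancel₀ (c k) (hc0 l)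
    rw [show (q:ℂ) ^ (y k * y l) * ((c k * q ^ y k - c l * q ^ y l) / (c k - c l))
        = ((q:ℂ) ^ (y k * y l) * (c k * q ^ y k - c l * q ^ y l)) / (c k - c l) from
        (mul_div_assoc _ _ _).symm,
      div_eq_div_iff ha1 hsub, pow_add]
    linear_combination (q:ℂ)^(y k * y l) * a * (c l - c k) * hzp2
      + (q:ℂ)^(y k * y l) * ((q:ℂ)^(y k) - (q:ℂ)^(y l)) * hca
  rw [hdiag, hoff]
  simp only [Finset.prod_mul_distrib, Finset.prod_pow_eq_pow_sum]
  rw [show ((-1:ℂ)) ^ (∑ i, y i) * q ^ (∑ k, (y k + (y k).choose 2))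
      * ((q:ℂ) ^ (∑ k : Fin p, ∑ l ∈ Finset.univ.filter (fun l => k < l), y k * y l)
        * ∏ k : Fin p, ∏ l ∈ Finset.univ.filter (fun l => k < l),
          ((c k * q ^ y k - c l * q ^ y l) / (c k - c l)))
      = ((-1:ℂ)) ^ (∑ i, y i)
        * (q ^ (∑ k, (y k + (y k).choose 2))
          * q ^ (∑ k : Fin p, ∑ l ∈ Finset.univ.filter (fun l => k < l), y k * y l))
        * ∏ k : Fin p, ∏ l ∈ Finset.univ.filter (fun l => k < l),
          ((c k * q ^ y k - c l * q ^ y l) / (c k - c l)) by ring,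
    ← pow_add, expid y]
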